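/- (Lemma 10) Let τ ≥ 1 and n ≥ 1 be integers, let M be a matching of G leaving exactly f vertices free, and let y, z satisfy: (i) z(B) ≥ 0 for every odd set B; (ii) whenever z(B) > 0, M contains exactly ⌊|B|/2⌋ edges with both endpoints in B; (iii) yz(e) ≥ w(e) − 2 for every edge e; (iv) yz(e) ≤ w(e) for every e ∈ M. Suppose y₆ : V → ℤ is a function with y(u) = y₆(u) − τ for every free vertex u, and suppose there exists a perfect matching M' with |M'| ≤ n such that w(M) ≤ w(M') + 8n − Σ_{u free} y₆(u). Then f·τ ≤ 10n, i.e., f ≤ 10n/τ. -/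

import Mathlib

open Finset
open scoped Classical

/-- `yz(e)` for an edge `e = {u,v}`: `y u + y v + ∑_{B ⊇ {u,v}} z B`. -/
noncomputable def yzE {V : Type*} [Fintype V] (y : V → ℤ) (z : Finset V → ℤ) : Sym2 V → ℤ :=
  Sym2.lift ⟨fun u v => y u + y v + ∑ B ∈ Finset.univ.filter (fun B : Finset V => u ∈ B ∧ v ∈ B), z B,
    fun u v => by
      dsimp only
      rw [add_comm (y u) (y v)]
      congr 1
      apply Finset.sum_congr _ (fun _ _ => rfl)
      ext B
      simp [and_comm]⟩

/-- `M` is a matching of `G`: a set of edges of `G`, pairwise vertex-disjoint. -/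
def IsMatchingF {V : Type*} (G : SimpleGraph V) (M : Finset (Sym2 V)) : Prop :=
  (∀ e ∈ M, e ∈ G.edgeSet) ∧ ∀ e ∈ M, ∀ f ∈ M, e ≠ f → ∀ v : V, v ∈ e → v ∉ f

/-- A matching is perfect if every vertex is covered. -/
def IsPerfectF {V : Type*} (M : Finset (Sym2 V)) : Prop := ∀ v : V, ∃ e ∈ M, v ∈ e

/-- A vertex is free (unmatched) if it lies on no edge of `M`. -/
def isFreeV {V : Type*} (M : Finset (Sym2 V)) (v : V) : Prop := ∀ e ∈ M, v ∉ e

/-- The edges of `M` with both endpoints in `B` (i.e. `M ∩ E(B)`). -/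
noncomputable def edgesWithin {V : Type*} (M : Finset (Sym2 V)) (B : Finset V) : Finset (Sym2 V) :=
  M.filter (fun e => ∀ v ∈ e, v ∈ B)

/-- The dual objective `yz(V) = ∑ y(v) + ∑_B z(B)·⌊|B|/2⌋`. -/
noncomputable def dualObj {V : Type*} [Fintype V] (y : V → ℤ) (z : Finset V → ℤ) : ℤ :=
  (∑ v, y v) + ∑ B : Finset V, z B * ((B.card / 2 : ℕ) : ℤ)


set_option linter.unusedSectionVars false

section Helpers

variable {V : Type*} [Fintype V]

noncomputable def vertsOf (e : Sym2 V) : Finset V := Finset.univ.filter (· ∈ e)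

lemma mem_vertsOf {e : Sym2 V} {v : V} : v ∈ vertsOf e ↔ v ∈ e := by
  simp [vertsOf]

lemma vertsOf_mk (u v : V) : vertsOf (s(u, v)) = {u, v} := by
  ext x; simp [vertsOf, Sym2.mem_iff]

lemma yzE_mk (y : V → ℤ) (z : Finset V → ℤ) (u v : V) :
    yzE y z s(u, v)
      = y u + y v + ∑ B ∈ Finset.univ.filter (fun B : Finset V => u ∈ B ∧ v ∈ B), z B := rfl

lemma sum_vertsOf (y : V → ℤ) {e : Sym2 V} (he : ¬ e.IsDiag) :
    ∑ v ∈ vertsOf e, y v = yzE y 0 e := by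
  induction e using Sym2.ind with
  | _ u v =>
    rw [Sym2.mk_isDiag_iff] at he
    rw [vertsOf_mk, yzE_mk]
    simp [Finset.sum_pair he]

lemma yzE_split (y : V → ℤ) (z : Finset V → ℤ) (e : Sym2 V) :
    yzE y z e = yzE y 0 e
      + ∑ B ∈ Finset.univ.filter (fun B : Finset V => ∀ x ∈ e, x ∈ B), z B := by
  induction e using Sym2.ind with
  | _ u v =>
    rw [yzE_mk, yzE_mk]
    simp only [Pi.zero_apply, Finset.sum_const_zero, add_zero]
    congr 1
    refine Finset.sum_congr ?_ (fun _ _ => rfl)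
    ext B
    simp [Sym2.mem_iff, or_imp, forall_and]

lemma mem_edgesWithin {M : Finset (Sym2 V)} {B : Finset V} {e : Sym2 V} :
    e ∈ edgesWithin M B ↔ e ∈ M ∧ ∀ v ∈ e, v ∈ B := by
  simp [edgesWithin]

lemma edgesWithin_subset {M : Finset (Sym2 V)} {B : Finset V} {e : Sym2 V}
    (h : e ∈ edgesWithin M B) : e ∈ M := (mem_edgesWithin.mp h).1

lemma edgesWithin_eq (M : Finset (Sym2 V)) (B : Finset V) :
    edgesWithin M B = M.filter (fun e => ∀ x ∈ e, x ∈ B) := by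
  ext e; simp [edgesWithin]

lemma matching_disjoint {G : SimpleGraph V} {M : Finset (Sym2 V)} (hM : IsMatchingF G M)
    {e fe : Sym2 V} (he : e ∈ M) (hfe : fe ∈ M) (hef : e ≠ fe) :
    Disjoint (vertsOf e) (vertsOf fe) := by
  refine Finset.disjoint_left.mpr fun v hv hvf => ?_
  exact hM.2 e he fe hfe hef v (mem_vertsOf.mp hv) (mem_vertsOf.mp hvf)

lemma card_vertsOf {G : SimpleGraph V} {M : Finset (Sym2 V)} (hM : IsMatchingF G M)
    {e : Sym2 V} (he : e ∈ M) : (vertsOf e).card = 2 := by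
  have hd : ¬ e.IsDiag := G.not_isDiag_of_mem_edgeSet (hM.1 e he)
  induction e using Sym2.ind with
  | _ u v =>
    rw [Sym2.mk_isDiag_iff] at hd
    rw [vertsOf_mk, Finset.card_pair hd]

lemma sum_yzE_matching {G : SimpleGraph V} {M : Finset (Sym2 V)} (hM : IsMatchingF G M)
    (y : V → ℤ) (z : Finset V → ℤ) :
    ∑ e ∈ M, yzE y z e
      = (∑ v ∈ Finset.univ.filter (fun v => ¬ isFreeV M v), y v)
        + ∑ B : Finset V, z B * ((edgesWithin M B).card : ℤ) := by
  have h1 : ∑ e ∈ M, yzE y 0 e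
      = ∑ v ∈ Finset.univ.filter (fun v => ¬ isFreeV M v), y v := by
    have hbu : Finset.univ.filter (fun v => ¬ isFreeV M v) = M.biUnion vertsOf := by
      ext v
      simp [isFreeV, mem_vertsOf, not_forall]
    rw [hbu, Finset.sum_biUnion (fun e he fe hfe hef => matching_disjoint hM he hfe hef)]
    refine Finset.sum_congr rfl fun e he => ?_
    exact (sum_vertsOf y (G.not_isDiag_of_mem_edgeSet (hM.1 e he))).symm
  have h2 : ∑ e ∈ M, ∑ B ∈ Finset.univ.filter (fun B : Finset V => ∀ x ∈ e, x ∈ B), z B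
      = ∑ B : Finset V, z B * ((edgesWithin M B).card : ℤ) := by
    calc ∑ e ∈ M, ∑ B ∈ Finset.univ.filter (fun B : Finset V => ∀ x ∈ e, x ∈ B), z B
        = ∑ e ∈ M, ∑ B : Finset V, if (∀ x ∈ e, x ∈ B) then z B else 0 := by
          refine Finset.sum_congr rfl fun e _ => ?_
          rw [Finset.sum_filter]
      _ = ∑ B : Finset V, ∑ e ∈ M, if (∀ x ∈ e, x ∈ B) then z B else 0 := Finset.sum_comm
      _ = ∑ B : Finset V, z B * ((edgesWithin M B).card : ℤ) := by
          refine Finset.sum_congr rfl fun B _ => ?_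
          rw [← Finset.sum_filter]
          rw [← edgesWithin_eq]
          rw [Finset.sum_const, nsmul_eq_mul, mul_comm]
  calc ∑ e ∈ M, yzE y z e
      = ∑ e ∈ M, (yzE y 0 e
          + ∑ B ∈ Finset.univ.filter (fun B : Finset V => ∀ x ∈ e, x ∈ B), z B) :=
        Finset.sum_congr rfl fun e _ => yzE_split y z e
    _ = _ := by rw [Finset.sum_add_distrib, h1, h2]

lemma card_edgesWithin_le {G : SimpleGraph V} {M : Finset (Sym2 V)} (hM : IsMatchingF G M)
    (B : Finset V) : (edgesWithin M B).card ≤ B.card / 2 := by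
  rw [Nat.le_div_iff_mul_le two_pos]
  have hsub : (edgesWithin M B).biUnion vertsOf ⊆ B := by
    intro v hv
    simp only [Finset.mem_biUnion] at hv
    obtain ⟨e, he, hv⟩ := hv
    exact (mem_edgesWithin.mp he).2 v (mem_vertsOf.mp hv)
  have hcard : ((edgesWithin M B).biUnion vertsOf).card
      = ∑ e ∈ edgesWithin M B, (vertsOf e).card := by
    refine Finset.card_biUnion fun e he fe hfe hef => ?_
    exact matching_disjoint hM (edgesWithin_subset he) (edgesWithin_subset hfe) hef
  have h2 : ∑ e ∈ edgesWithin M B, (vertsOf e).card = (edgesWithin M B).card * 2 := by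
    calc ∑ e ∈ edgesWithin M B, (vertsOf e).card
        = ∑ _e ∈ edgesWithin M B, 2 :=
          Finset.sum_congr rfl (fun e he => card_vertsOf hM (edgesWithin_subset he))
      _ = (edgesWithin M B).card * 2 := by rw [Finset.sum_const, smul_eq_mul]
  calc (edgesWithin M B).card * 2 = ((edgesWithin M B).biUnion vertsOf).card := by
        rw [hcard, h2]
    _ ≤ B.card := Finset.card_le_card hsub

end Helpers

/-- Lemma 10: if the matching `M` leaves `f` vertices free, relaxed
complementary slackness holds, `y(u) = y₆(u) - τ` on free vertices, and there is a
perfect matching `M'` with `|M'| ≤ n` and `w(M) ≤ w(M') + 8n - ∑_{u free} y₆(u)`,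
then `f·τ ≤ 10n`. -/
theorem free_vertices_bound {V : Type*} [Fintype V] (G : SimpleGraph V)
    (w : Sym2 V → ℤ) (y y₆ : V → ℤ) (z : Finset V → ℤ)
    (τ n : ℤ) (hτ : 1 ≤ τ) (hn : 1 ≤ n)
    (M : Finset (Sym2 V)) (hM : IsMatchingF G M)
    (f : ℕ) (hf : f = (Finset.univ.filter (fun u => isFreeV M u)).card)
    (hsupp : ∀ B : Finset V, z B ≠ 0 → Odd B.card ∧ 3 ≤ B.card)
    (hz : ∀ B : Finset V, Odd B.card → 0 ≤ z B)
    (hactive : ∀ B : Finset V, 0 < z B → (edgesWithin M B).card = B.card / 2)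
    (hneardom : ∀ e ∈ G.edgeSet, w e - 2 ≤ yzE y z e)
    (hneartight : ∀ e ∈ M, yzE y z e ≤ w e)
    (hy₆ : ∀ u : V, isFreeV M u → y u = y₆ u - τ)
    (M' : Finset (Sym2 V)) (hM' : IsMatchingF G M') (hM'p : IsPerfectF M')
    (hM'card : (M'.card : ℤ) ≤ n)
    (hw : ∑ e ∈ M, w e ≤
      (∑ e ∈ M', w e) + 8 * n - ∑ u ∈ Finset.univ.filter (fun u => isFreeV M u), y₆ u) :
    (f : ℤ) * τ ≤ 10 * n := by
  -- z is nonnegative everywhere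
  have hz0 : ∀ B : Finset V, 0 ≤ z B := by
    intro B
    by_cases h : z B = 0
    · simp [h]
    · exact hz B (hsupp B h).1
  set F : Finset V := Finset.univ.filter (fun u => isFreeV M u) with hF
  -- lower bound on w(M)
  have hMsum : ∑ e ∈ M, yzE y z e
      = ((∑ v, y v) - ∑ u ∈ F, y u) + ∑ B : Finset V, z B * ((B.card / 2 : ℕ) : ℤ) := by
    rw [sum_yzE_matching hM y z]
    congr 1
    · have := Finset.sum_filter_add_sum_filter_not Finset.univ (fun u => isFreeV M u) y
      rw [hF]
      omega
    · refine Finset.sum_congr rfl fun B _ => ?_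
      by_cases h : z B = 0
      · simp [h]
      · have hpos : 0 < z B := lt_of_le_of_ne (hz0 B) (Ne.symm h)
        rw [hactive B hpos]
  have h1 : ((∑ v, y v) - ∑ u ∈ F, y u) + ∑ B : Finset V, z B * ((B.card / 2 : ℕ) : ℤ)
      ≤ ∑ e ∈ M, w e := by
    rw [← hMsum]
    exact Finset.sum_le_sum fun e he => hneartight e he
  -- upper bound on w(M')
  have hM'full : Finset.univ.filter (fun v => ¬ isFreeV M' v) = (Finset.univ : Finset V) := by
    refine Finset.filter_true_of_mem fun v _ => ?_
    intro hfree
    obtain ⟨e, he, hv⟩ := hM'p v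
    exact hfree e he hv
  have h2 : ∑ e ∈ M', w e ≤ ((∑ v, y v) + ∑ B : Finset V, z B * ((B.card / 2 : ℕ) : ℤ)) + 2 * n := by
    have step1 : ∑ e ∈ M', w e ≤ ∑ e ∈ M', (yzE y z e + 2) :=
      Finset.sum_le_sum fun e he => by linarith [hneardom e (hM'.1 e he)]
    have step2 : ∑ e ∈ M', (yzE y z e + 2) = (∑ e ∈ M', yzE y z e) + 2 * M'.card := by
      rw [Finset.sum_add_distrib, Finset.sum_const, nsmul_eq_mul, mul_comm]
    have step3 : ∑ e ∈ M', yzE y z e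
        ≤ (∑ v, y v) + ∑ B : Finset V, z B * ((B.card / 2 : ℕ) : ℤ) := by
      rw [sum_yzE_matching hM' y z, hM'full]
      refine add_le_add (le_refl _) (Finset.sum_le_sum fun B _ => ?_)
      exact mul_le_mul_of_nonneg_left (Nat.cast_le.mpr (card_edgesWithin_le hM' B)) (hz0 B)
    calc ∑ e ∈ M', w e ≤ (∑ e ∈ M', yzE y z e) + 2 * M'.card := by rw [← step2]; exact step1
      _ ≤ ((∑ v, y v) + ∑ B : Finset V, z B * ((B.card / 2 : ℕ) : ℤ)) + 2 * n := by
          have := hM'card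
          have h2n : 2 * (M'.card : ℤ) ≤ 2 * n := by linarith
          linarith [step3]
  -- sum over free vertices of τ
  have hfree : ∑ u ∈ F, (y₆ u - y u) = (f : ℤ) * τ := by
    calc ∑ u ∈ F, (y₆ u - y u) = ∑ _u ∈ F, τ := by
          refine Finset.sum_congr rfl fun u hu => ?_
          have := hy₆ u (Finset.mem_filter.mp hu).2
          omega
      _ = (F.card : ℤ) * τ := by rw [Finset.sum_const, nsmul_eq_mul]
      _ = (f : ℤ) * τ := by rw [hf]
  have : ∑ u ∈ F, y₆ u - ∑ u ∈ F, y u ≤ 10 * n := by linarith [h1, h2, hw]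
  calc (f : ℤ) * τ = ∑ u ∈ F, (y₆ u - y u) := hfree.symm
    _ = ∑ u ∈ F, y₆ u - ∑ u ∈ F, y u := Finset.sum_sub_distrib _ _
    _ ≤ 10 * n := this
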